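/- Let ha = h1 · o_t · g · o_{t'} · h2 be a well-formed, alternating, end-to-end opaque history in which every invocation has a matching response, where o_t and o_{t'} are completed operation calls (an invocation immediately followed by its matching response) of distinct transactions t ≠ t', and g contains no events of t and no events of t'. Then: (1) if o_t is not a TXBegin operation, the history h1 · g · o_{t'} · o_t · h2 is end-to-end opaque and equivalent (≡) to ha; and (2) if the response of o_{t'} is neither ret(TXCommit)_{t'} nor ret(TXAbort)_{t'}, the history h1 · o_{t'} · o_t · g · h2 is end-to-end opaque and equivalent (≡) to ha. -/

import Mathlib

namespace TM

/-- Events of a TM implementation: invocations and responses. -/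
inductive Event (T A V : Type) where
  | invBegin  (t : T)
  | invCommit (t : T)
  | invRead   (t : T) (a : A)
  | invWrite  (t : T) (a : A) (v : V)
  | respBegin  (t : T)
  | respCommit (t : T)
  | respRead   (t : T) (v : V)
  | respWrite  (t : T)
  | respAbort  (t : T)
  deriving DecidableEq

namespace Event

/-- The transaction an event belongs to. -/
def tx {T A V : Type} : Event T A V → T
  | invBegin t => t
  | invCommit t => t
  | invRead t _ => t
  | invWrite t _ _ => t
  | respBegin t => t
  | respCommit t => t
  | respRead t _ => t
  | respWrite t => t
  | respAbort t => t

/-- Is the event an invocation? -/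
def isInv {T A V : Type} : Event T A V → Bool
  | invBegin _ => true
  | invCommit _ => true
  | invRead _ _ => true
  | invWrite _ _ _ => true
  | _ => false

/-- Is the event a response? -/
def isResp {T A V : Type} (e : Event T A V) : Bool := !e.isInv

end Event

/-- An invocation together with a matching response. -/
inductive Matches {T A V : Type} : Event T A V → Event T A V → Prop where
  | beginOk (t : T) : Matches (.invBegin t) (.respBegin t)
  | commitOk (t : T) : Matches (.invCommit t) (.respCommit t)
  | commitAbort (t : T) : Matches (.invCommit t) (.respAbort t)
  | readOk (t : T) (a : A) (v : V) : Matches (.invRead t a) (.respRead t v)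
  | readAbort (t : T) (a : A) : Matches (.invRead t a) (.respAbort t)
  | writeOk (t : T) (a : A) (v : V) : Matches (.invWrite t a v) (.respWrite t)
  | writeAbort (t : T) (a : A) (v : V) : Matches (.invWrite t a v) (.respAbort t)

variable {T A V : Type}

section Histories
variable [DecidableEq T]

/-- `proj h t` is `h|t`, the subsequence of events of transaction `t`. -/
def proj (h : List (Event T A V)) (t : T) : List (Event T A V) :=
  h.filter (fun e => decide (e.tx = t))

/-- An alternating sequence of invocations and matching responses, beginning with
an invocation and possibly ending with an invocation. -/
inductive Alternating : List (Event T A V) → Prop where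
  | nil : Alternating []
  | single (e : Event T A V) : e.isInv = true → Alternating [e]
  | cons (i r : Event T A V) (rest : List (Event T A V)) :
      i.isInv = true → Matches i r → Alternating rest → Alternating (i :: r :: rest)

/-- Well-formedness of the projection `l = h|t`. -/
def WfProj (t : T) (l : List (Event T A V)) : Prop :=
  l = [] ∨ (l.head? = some (.invBegin t) ∧
    ∀ i, 0 < i → i + 1 < l.length →
      l[i]? ≠ some (.respBegin t) ∧ l[i]? ≠ some (.respCommit t) ∧
      l[i]? ≠ some (.respAbort t))

/-- A history is well-formed if every projection is alternating and well-formed. -/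
def WellFormed (h : List (Event T A V)) : Prop :=
  ∀ t : T, Alternating (proj h t) ∧ WfProj t (proj h t)

def Committed (h : List (Event T A V)) (t : T) : Prop :=
  (proj h t).getLast? = some (.respCommit t)

def Aborted (h : List (Event T A V)) (t : T) : Prop :=
  (proj h t).getLast? = some (.respAbort t)

def Finished (h : List (Event T A V)) (t : T) : Prop := Committed h t ∨ Aborted h t

/-- `h ≡ h'` iff `h|t = h'|t` for all transactions `t`. -/
def Equiv (h h' : List (Event T A V)) : Prop := ∀ t : T, proj h t = proj h' t

/-- Real-time order on transactions: `t` is finished and the last event of `t`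
precedes the first event of `t'`. -/
def TransPrec (h : List (Event T A V)) (t t' : T) : Prop :=
  Finished h t ∧ (∃ e ∈ h, e.tx = t') ∧
    ∀ (i j : ℕ) (e e' : Event T A V), h[i]? = some e → h[j]? = some e' →
      e.tx = t → e'.tx = t' → i < j

/-- Positions (in `h`) of the events of transaction `t`, in order. -/
def txPositions (h : List (Event T A V)) (t : T) : List ℕ :=
  (List.range h.length).filter (fun i => decide ((h[i]?).map Event.tx = some t))

/-- Real-time order on operation calls. An operation call is identified by its
transaction together with its index `k` within `h|t`: its invocation is the
`2k`-th event of `t` and its response the `2k+1`-th event of `t`.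
`OpPrec h o o'` holds iff the response of `o` precedes the invocation of `o'`. -/
def OpPrec (h : List (Event T A V)) (o o' : T × ℕ) : Prop :=
  ∃ i j, (txPositions h o.1)[2 * o.2 + 1]? = some i ∧
    (txPositions h o'.1)[2 * o'.2]? = some j ∧ i < j

/-- Helper for `complete`, processing the reversed history; an invocation whose
transaction has no later event is pending and gets removed. -/
def completeRev : List (Event T A V) → List T → List (Event T A V)
  | [], _ => []
  | e :: rest, seen =>
    if e.isInv && !(seen.contains e.tx) then completeRev rest (e.tx :: seen)
    else e :: completeRev rest (e.tx :: seen)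

/-- `[h]`: the history `h` with all pending invocations removed. -/
def complete (h : List (Event T A V)) : List (Event T A V) :=
  (completeRev h.reverse []).reverse

/-- `Extends h he`: `he` is obtained from `h` by appending matching responses
for some of the pending invocations of `h`. -/
def Extends (h he : List (Event T A V)) : Prop :=
  ∃ rs : List (Event T A V), he = h ++ rs ∧
    rs.Pairwise (fun r r' => r.tx ≠ r'.tx) ∧
    ∀ r ∈ rs, r.isResp = true ∧ ∃ i, (proj h r.tx).getLast? = some i ∧ Matches i r

/-- Non-interleaved history: transactions do not overlap. -/
def NonInterleaved (h : List (Event T A V)) : Prop :=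
  ∀ (h1 h2 h3 : List (Event T A V)) (p q : T),
    h = h1 ++ Event.invBegin p :: h2 ++ Event.invBegin q :: h3 →
    (∀ t : T, Event.invBegin t ∉ h2) →
    (Event.respCommit p ∈ h2 ∨ Event.respAbort p ∈ h2 ∨ ∀ e ∈ h3, e.tx ≠ p)

section Valid
variable [DecidableEq A] [DecidableEq V] [Zero V]

/-- Memory evolution for one invocation/response pair. -/
def stepOk (σ σ' : A → V) : Event T A V → Event T A V → Prop
  | .invWrite _ a v, .respWrite _ => σ' = Function.update σ a v
  | .invRead _ a, .respRead _ v => σ a = v ∧ σ' = σ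
  | _, _ => σ' = σ

/-- Valid history: an alternating sequence of invocations and matching responses
consistent with a sequence of memory states starting at the all-zero memory. -/
def Valid (h : List (Event T A V)) : Prop :=
  ∃ (n : ℕ) (σ : ℕ → A → V), h.length = 2 * n ∧ (∀ a, σ 0 a = (0 : V)) ∧
    ∀ i < n, ∃ ei er : Event T A V, h[2 * i]? = some ei ∧ h[2 * i + 1]? = some er ∧
      ei.isInv = true ∧ Matches ei er ∧ stepOk (σ i) (σ (i + 1)) ei er

/-- `hs` is legal at index `idx`: the projection of `hs[0..idx-1]` onto events of
committed transactions plus events of the transaction of `hs(idx)` is valid. -/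
def LegalAt (hs : List (Event T A V)) (idx : ℕ) : Prop :=
  ∀ e : Event T A V, hs[idx]? = some e →
    Valid ((hs.take idx).filter (fun e' =>
      decide ((proj (hs.take idx) e'.tx).getLast? = some (Event.respCommit e'.tx)) ||
      decide (e'.tx = e.tx)))

def Legal (hs : List (Event T A V)) : Prop := ∀ idx, LegalAt hs idx

/-- Sequential history: well-formed, non-interleaved and legal. -/
def Sequential (hs : List (Event T A V)) : Prop :=
  WellFormed hs ∧ NonInterleaved hs ∧ Legal hs

/-- End-to-end opacity. -/
def EndToEndOpaque (h : List (Event T A V)) : Prop :=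
  ∃ he, Extends h he ∧ ∃ hs, Sequential hs ∧ Equiv (complete he) hs ∧
    ∀ t t' : T, TransPrec (complete he) t t' → TransPrec hs t t'

/-- Opacity: every prefix is end-to-end opaque. -/
def Opaque (h : List (Event T A V)) : Prop :=
  ∀ h', h' <+: h → EndToEndOpaque h'

/-- `Lin h ha`: `[h] ≡ ha` and `≺≺_[h] ⊆ ≺≺_ha`. -/
def Lin (h ha : List (Event T A V)) : Prop :=
  Equiv (complete h) ha ∧ ∀ o o' : T × ℕ, OpPrec (complete h) o o' → OpPrec ha o o'

/-- `ha` linearizes `h`: `lin(he, ha)` for some `he ∈ extend(h)`. -/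
def Linearizes (ha h : List (Event T A V)) : Prop :=
  ∃ he, Extends h he ∧ Lin he ha

/-- Prefix-closed set of histories. -/
def PrefixClosed (S : Set (List (Event T A V))) : Prop :=
  ∀ h ∈ S, ∀ h', h' <+: h → h' ∈ S

end Valid
end Histories
end TM

namespace TM
section Aux
variable {T A V : Type} [DecidableEq T]
set_option linter.unusedSectionVars false

theorem Matches.inv_isInv {i r : Event T A V} (h : Matches i r) : i.isInv = true := by
  cases h <;> rfl

/-- Locate an index in a four-block concatenation. -/
theorem get4 (L1 L2 L3 L4 : List (Event T A V)) (i : ℕ) :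
    (L1 ++ L2 ++ L3 ++ L4)[i]? =
      if i < L1.length then L1[i]?
      else if i < L1.length + L2.length then L2[i - L1.length]?
      else if i < L1.length + L2.length + L3.length then L3[i - L1.length - L2.length]?
      else L4[i - L1.length - L2.length - L3.length]? := by
  simp only [List.append_assoc]
  by_cases h1 : i < L1.length
  · rw [List.getElem?_append_left h1, if_pos h1]
  · rw [List.getElem?_append_right (Nat.le_of_not_lt h1), if_neg h1]
    by_cases h2 : i < L1.length + L2.length
    · rw [List.getElem?_append_left (by omega), if_pos h2]
    · rw [List.getElem?_append_right (by omega), if_neg h2]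
      by_cases h3 : i < L1.length + L2.length + L3.length
      · rw [List.getElem?_append_left (by omega), if_pos h3]
      · rw [List.getElem?_append_right (by omega), if_neg h3]

theorem proj_append (l1 l2 : List (Event T A V)) (u : T) :
    proj (l1 ++ l2) u = proj l1 u ++ proj l2 u :=
  List.filter_append _ _

theorem proj_eq_nil {l : List (Event T A V)} {u : T} (h : ∀ e ∈ l, e.tx ≠ u) :
    proj l u = [] := by
  unfold proj
  rw [List.filter_eq_nil_iff]
  intro e he
  simpa using h e he

theorem mem_of_mem_proj {l : List (Event T A V)} {u : T} {e : Event T A V}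
    (h : e ∈ proj l u) : e ∈ l ∧ e.tx = u := by
  have := List.mem_filter.mp h
  exact ⟨this.1, by simpa using this.2⟩

/-- Projections are invariant under swapping adjacent blocks with disjoint
transactions. -/
theorem equiv_swap (p X Y s : List (Event T A V))
    (disj : ∀ x ∈ X, ∀ y ∈ Y, x.tx ≠ y.tx) :
    Equiv (p ++ Y ++ X ++ s) (p ++ X ++ Y ++ s) := by
  intro u
  simp only [proj_append]
  by_cases hx : ∃ x ∈ X, x.tx = u
  · obtain ⟨x, hxX, hxu⟩ := hx
    have hY : proj Y u = [] :=
      proj_eq_nil (fun y hy hyu => disj x hxX y hy (hxu.trans hyu.symm))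
    rw [hY]; simp
  · have hX : proj X u = [] := proj_eq_nil (fun e he heu => hx ⟨e, he, heu⟩)
    rw [hX]; simp

/-- Real-time transaction precedence transfers backwards across a block swap,
given the side condition `HK`. -/
theorem transPrec_swap (p X Y s : List (Event T A V)) {t1 t2 : T}
    (disj : ∀ x ∈ X, ∀ y ∈ Y, x.tx ≠ y.tx)
    (HK : (∃ y ∈ Y, y.tx = t1) → (∃ x ∈ X, x.tx = t2) →
      (∃ e ∈ p, e.tx = t2) ∨ (∃ e ∈ s, e.tx = t1) ∨
        ¬ Finished (p ++ Y ++ X ++ s) t1)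
    (H : TransPrec (p ++ Y ++ X ++ s) t1 t2) :
    TransPrec (p ++ X ++ Y ++ s) t1 t2 := by
  obtain ⟨hfin, ⟨e0, he0, he0tx⟩, hord⟩ := H
  have hpe := (equiv_swap p X Y s disj) t1
  refine ⟨?_, ⟨e0, ?_, he0tx⟩, ?_⟩
  · unfold Finished Committed Aborted at hfin ⊢
    rw [← hpe]; exact hfin
  · simp only [List.append_assoc, List.mem_append] at he0 ⊢
    tauto
  · have map : ∀ (k : ℕ) (x : Event T A V), (p ++ X ++ Y ++ s)[k]? = some x →
        ∃ k', (p ++ Y ++ X ++ s)[k']? = some x ∧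
          ((k < p.length ∧ k' = k) ∨
           (p.length ≤ k ∧ k < p.length + X.length ∧ k' = k + Y.length) ∨
           (p.length + X.length ≤ k ∧ k < p.length + X.length + Y.length ∧
             k' = k - X.length) ∨
           (p.length + X.length + Y.length ≤ k ∧ k' = k)) := by
      intro k x hx
      rw [get4] at hx
      split_ifs at hx with h1 h2 h3
      · exact ⟨k, by rw [get4, if_pos h1]; exact hx, Or.inl ⟨h1, rfl⟩⟩
      · refine ⟨k + Y.length, ?_, Or.inr (Or.inl ⟨by omega, h2, rfl⟩)⟩
        rw [get4, if_neg (by omega), if_neg (by omega), if_pos (by omega)]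
        have : k + Y.length - p.length - Y.length = k - p.length := by omega
        rw [this]; exact hx
      · refine ⟨k - X.length, ?_, Or.inr (Or.inr (Or.inl ⟨by omega, h3, rfl⟩))⟩
        rw [get4, if_neg (by omega), if_pos (by omega)]
        have : k - X.length - p.length = k - p.length - X.length := by omega
        rw [this]; exact hx
      · refine ⟨k, ?_, Or.inr (Or.inr (Or.inr ⟨by omega, rfl⟩))⟩
        rw [get4, if_neg (by omega), if_neg (by omega), if_neg (by omega)]
        have : k - p.length - Y.length - X.length
            = k - p.length - X.length - Y.length := by omega
        rw [this]; exact hx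
    intro i j e e' hi hj hetx he'tx
    by_contra hlt
    push_neg at hlt
    have hilen := (List.getElem?_eq_some_iff.mp hi).1
    have hjlen := (List.getElem?_eq_some_iff.mp hj).1
    simp only [List.length_append] at hilen hjlen
    obtain ⟨i', hi', hic⟩ := map i e hi
    obtain ⟨j', hj', hjc⟩ := map j e' hj
    have hij' : i' < j' := hord i' j' e e' hi' hj' hetx he'tx
    by_cases hbad : p.length ≤ j ∧ j < p.length + X.length ∧
        p.length + X.length ≤ i ∧ i < p.length + X.length + Y.length
    · obtain ⟨hb1, hb2, hb3, hb4⟩ := hbad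
      have hjX : X[j - p.length]? = some e' := by
        rw [get4] at hj; rwa [if_neg (by omega), if_pos hb2] at hj
      have hiY : Y[i - p.length - X.length]? = some e := by
        rw [get4] at hi
        rwa [if_neg (by omega), if_neg (by omega), if_pos hb4] at hi
      have hXlt := (List.getElem?_eq_some_iff.mp hjX).1
      have hYlt := (List.getElem?_eq_some_iff.mp hiY).1
      rcases HK ⟨e, List.mem_of_getElem? hiY, hetx⟩ ⟨e', List.mem_of_getElem? hjX, he'tx⟩ with
        ⟨ep, hep, heptx⟩ | ⟨es, hes, hestx⟩ | hnf
      · obtain ⟨m, hm⟩ := List.mem_iff_getElem?.mp hep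
        have hmlen := (List.getElem?_eq_some_iff.mp hm).1
        have h1'' : (p ++ Y ++ X ++ s)[m]? = some ep := by
          rw [get4, if_pos hmlen]; exact hm
        have h2'' : (p ++ Y ++ X ++ s)[p.length + (i - p.length - X.length)]?
            = some e := by
          rw [get4, if_neg (by omega), if_pos (by omega)]
          have : p.length + (i - p.length - X.length) - p.length
              = i - p.length - X.length := by omega
          rw [this]; exact hiY
        have := hord _ _ e ep h2'' h1'' hetx heptx
        omega
      · obtain ⟨m, hm⟩ := List.mem_iff_getElem?.mp hes
        have h1'' : (p ++ Y ++ X ++ s)[p.length + Y.length + X.length + m]?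
            = some es := by
          rw [get4, if_neg (by omega), if_neg (by omega), if_neg (by omega)]
          have : p.length + Y.length + X.length + m - p.length - Y.length - X.length
              = m := by omega
          rw [this]; exact hm
        have h2'' : (p ++ Y ++ X ++ s)[p.length + Y.length + (j - p.length)]?
            = some e' := by
          rw [get4, if_neg (by omega), if_neg (by omega), if_pos (by omega)]
          have : p.length + Y.length + (j - p.length) - p.length - Y.length
              = j - p.length := by omega
          rw [this]; exact hjX
        have := hord _ _ es e' h1'' h2'' hestx he'tx
        omega
      · exact hnf hfin
    · omega

theorem completeRev_length_le (l : List (Event T A V)) (seen : List T) :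
    (completeRev l seen).length ≤ l.length := by
  induction l generalizing seen with
  | nil => simp [completeRev]
  | cons e rest ih =>
    rw [completeRev]
    split
    · exact (ih _).trans (Nat.le_succ _)
    · simpa using ih _

theorem completeRev_eq_self (l : List (Event T A V)) (seen : List T)
    (H : ∀ pre (e : Event T A V) suf, l = pre ++ e :: suf → e.isInv = true →
      e.tx ∈ seen ∨ ∃ e' ∈ pre, e'.tx = e.tx) :
    completeRev l seen = l := by
  induction l generalizing seen with
  | nil => rfl
  | cons e rest ih =>
    have h0 : e.isInv = true → e.tx ∈ seen := by
      intro hinv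
      rcases H [] e rest rfl hinv with h | ⟨e', he', _⟩
      · exact h
      · simp at he'
    rw [completeRev]
    have hcond : (e.isInv && !(seen.contains e.tx)) = false := by
      by_cases hb : e.isInv = true
      · have : e.tx ∈ seen := h0 hb
        simp [hb, this]
      · simp only [Bool.not_eq_true] at hb
        simp [hb]
    rw [if_neg (by rw [hcond]; simp)]
    congr 1
    apply ih
    intro pre e' suf hsplit hinv'
    rcases H (e :: pre) e' suf (by rw [hsplit]; rfl) hinv' with h | ⟨x, hx, hxtx⟩
    · exact Or.inl (List.mem_cons_of_mem _ h)
    · rcases List.mem_cons.mp hx with rfl | hx'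
      · exact Or.inl (by rw [← hxtx]; exact List.mem_cons_self)
      · exact Or.inr ⟨x, hx', hxtx⟩

theorem noPending_of_completeRev (l : List (Event T A V)) (seen : List T)
    (Heq : completeRev l seen = l) :
    ∀ pre (e : Event T A V) suf, l = pre ++ e :: suf → e.isInv = true →
      e.tx ∈ seen ∨ ∃ e' ∈ pre, e'.tx = e.tx := by
  induction l generalizing seen with
  | nil =>
    intro pre e suf h
    cases pre <;> simp at h
  | cons x rest ih =>
    rw [completeRev] at Heq
    by_cases hc : (x.isInv && !(seen.contains x.tx)) = true
    · rw [if_pos hc] at Heq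
      have hle := completeRev_length_le rest (x.tx :: seen)
      have hl := congrArg List.length Heq
      simp only [List.length_cons] at hl
      omega
    · rw [if_neg hc] at Heq
      have Heq' : completeRev rest (x.tx :: seen) = rest := by
        injection Heq
      intro pre e suf hsplit hinv
      cases pre with
      | nil =>
        simp only [List.nil_append, List.cons.injEq] at hsplit
        obtain ⟨rfl, rfl⟩ := hsplit
        left
        simp only [hinv, Bool.true_and, Bool.not_eq_true', Bool.not_eq_false] at hc
        simpa using hc
      | cons y pre' =>
        simp only [List.cons_append, List.cons.injEq] at hsplit
        obtain ⟨rfl, hrest⟩ := hsplit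
        rcases ih (x.tx :: seen) Heq' pre' e suf hrest hinv with h | ⟨e', he', htx⟩
        · rcases List.mem_cons.mp h with h | h
          · exact Or.inr ⟨x, List.mem_cons_self, h.symm⟩
          · exact Or.inl h
        · exact Or.inr ⟨e', List.mem_cons_of_mem _ he', htx⟩

theorem head?_filter_split {α : Type*} (q : α → Bool) :
    ∀ (l : List α) (e : α), (l.filter q).head? = some e →
      ∃ pre suf, l = pre ++ e :: suf ∧ (∀ x ∈ pre, q x = false) ∧ q e = true := by
  intro l
  induction l with
  | nil => intro e h; simp at h
  | cons x rest ih =>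
    intro e h
    by_cases hq : q x = true
    · rw [List.filter_cons_of_pos hq] at h
      simp only [List.head?_cons, Option.some.injEq] at h
      subst h
      exact ⟨[], rest, rfl, by simp, hq⟩
    · rw [List.filter_cons_of_neg (by simpa using hq)] at h
      obtain ⟨pre, suf, hsp, hpre, hqe⟩ := ih e h
      refine ⟨x :: pre, suf, by rw [hsp]; rfl, ?_, hqe⟩
      intro z hz
      rcases List.mem_cons.mp hz with rfl | hz'
      · simpa using hq
      · exact hpre z hz'

theorem filter_head_of_split {α : Type*} (q : α → Bool) (pre : List α) (e : α)
    (suf : List α) (hpre : ∀ x ∈ pre, q x = false) (he : q e = true) :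
    ((pre ++ e :: suf).filter q).head? = some e := by
  rw [List.filter_append]
  have hnil : pre.filter q = [] :=
    List.filter_eq_nil_iff.mpr (fun x hx => by simp [hpre x hx])
  rw [hnil, List.nil_append, List.filter_cons_of_pos he, List.head?_cons]

/-- No transaction's last event is an invocation. -/
def noPendingProj (h : List (Event T A V)) : Prop :=
  ∀ (u : T) (e : Event T A V), (proj h u).getLast? = some e → e.isInv = false

theorem noPendingProj_of_complete (h : List (Event T A V))
    (hc : complete h = h) : noPendingProj h := by
  intro u e hlast
  by_contra hinv'
  have hinv : e.isInv = true := by simpa using hinv'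
  have hrev : completeRev h.reverse [] = h.reverse := by
    have := congrArg List.reverse hc
    rwa [complete, List.reverse_reverse] at this
  have h1 : ((h.reverse).filter (fun x => decide (x.tx = u))).head? = some e := by
    rw [List.filter_reverse, List.head?_reverse]
    exact hlast
  obtain ⟨pre, suf, hsplit, hpre, hqe⟩ := head?_filter_split _ _ _ h1
  have hetx : e.tx = u := by simpa using hqe
  rcases noPending_of_completeRev _ _ hrev pre e suf hsplit hinv with h2 | ⟨e', he', htx⟩
  · simp at h2
  · have := hpre e' he'
    rw [htx, hetx] at this
    simp at this

theorem complete_eq_self_of_noPending (h : List (Event T A V))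
    (H : noPendingProj h) : complete h = h := by
  rw [complete, completeRev_eq_self, List.reverse_reverse]
  intro pre e suf hsplit hinv
  by_contra hcon
  push_neg at hcon
  obtain ⟨-, hnone⟩ := hcon
  have h1 : ((pre ++ e :: suf).filter (fun x => decide (x.tx = e.tx))).head? = some e :=
    filter_head_of_split _ pre e suf (fun x hx => by simp [hnone x hx]) (by simp)
  rw [← hsplit] at h1
  have h2 : (proj h e.tx).getLast? = some e := by
    rw [← List.head?_reverse]
    unfold proj
    rw [← List.filter_reverse]
    exact h1
  have := H e.tx e h2
  rw [hinv] at this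
  simp at this

theorem extends_refl (h : List (Event T A V)) : Extends h h :=
  ⟨[], by simp, List.Pairwise.nil, by simp⟩

end Aux
end TM

/-- Transposition lemma: in a well-formed alternating end-to-end opaque history
`ha = h1 · o_t · g · o_t' · h2` with all invocations matched, where `o_t = ⟨it, rt⟩`
and `o_t' = ⟨it', rt'⟩` are completed operation calls of distinct transactions and
`g` contains no events of `t` or `t'`:
(1) if `o_t` is not a begin operation then `h1 · g · o_t' · o_t · h2` is
end-to-end opaque and equivalent to `ha`; and
(2) if the response of `o_t'` is neither a commit nor an abort response then
`h1 · o_t' · o_t · g · h2` is end-to-end opaque and equivalent to `ha`. -/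
theorem transpose_preserves_end_to_end_opacity {T A V : Type}
    [DecidableEq T] [DecidableEq A] [DecidableEq V] [Zero V]
    (h1 g h2 : List (TM.Event T A V)) (it rt it' rt' : TM.Event T A V)
    (t t' : T)
    (htx : it.tx = t) (hrtx : rt.tx = t)
    (htx' : it'.tx = t') (hrtx' : rt'.tx = t')
    (htt' : t ≠ t')
    (hinv : it.isInv = true) (hmatch : TM.Matches it rt)
    (hinv' : it'.isInv = true) (hmatch' : TM.Matches it' rt')
    (hg : ∀ e ∈ g, e.tx ≠ t ∧ e.tx ≠ t')
    (ha : List (TM.Event T A V))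
    (hha : ha = h1 ++ [it, rt] ++ g ++ [it', rt'] ++ h2)
    (hwf : TM.WellFormed ha)
    (halt : TM.Alternating ha)
    (hcomplete : TM.complete ha = ha)
    (hopq : TM.EndToEndOpaque ha) :
    ((∀ u : T, it ≠ TM.Event.invBegin u) →
      TM.EndToEndOpaque (h1 ++ g ++ [it', rt'] ++ [it, rt] ++ h2) ∧
      TM.Equiv (h1 ++ g ++ [it', rt'] ++ [it, rt] ++ h2) ha) ∧
    ((rt' ≠ TM.Event.respCommit t' ∧ rt' ≠ TM.Event.respAbort t') →
      TM.EndToEndOpaque (h1 ++ [it', rt'] ++ [it, rt] ++ g ++ h2) ∧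
      TM.Equiv (h1 ++ [it', rt'] ++ [it, rt] ++ g ++ h2) ha) := by
  have hNPa : TM.noPendingProj ha := TM.noPendingProj_of_complete ha hcomplete
  obtain ⟨he, hext, hs, hseq, hequiv, hpre⟩ := hopq
  have hhe : he = ha := by
    obtain ⟨rs, hrs1, hrs2, hrs3⟩ := hext
    rcases rs with _ | ⟨r, rs'⟩
    · simpa using hrs1
    · exfalso
      obtain ⟨hresp, i, hlast, hm⟩ := hrs3 r (by simp)
      have h1' := hNPa r.tx i hlast
      have h2' := hm.inv_isInv
      rw [h1'] at h2'
      simp at h2'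
  rw [hhe] at hequiv hpre
  rw [hcomplete] at hequiv hpre
  constructor
  · -- case 1 : move o_t after g and o_t'
    intro hnb
    have hha' : ha = h1 ++ [it, rt] ++ (g ++ [it', rt']) ++ h2 := by
      rw [hha]; simp [List.append_assoc]
    have hlist : h1 ++ g ++ [it', rt'] ++ [it, rt] ++ h2
        = h1 ++ (g ++ [it', rt']) ++ [it, rt] ++ h2 := by
      simp [List.append_assoc]
    have disj : ∀ x ∈ [it, rt], ∀ y ∈ g ++ [it', rt'], x.tx ≠ y.tx := by
      intro x hx y hy
      have hxt : x.tx = t := by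
        simp only [List.mem_cons, List.not_mem_nil, or_false] at hx
        rcases hx with rfl | rfl
        exacts [htx, hrtx]
      rw [hxt]
      rcases List.mem_append.mp hy with hyg | hy2
      · exact fun hh => (hg y hyg).1 hh.symm
      · have hyt : y.tx = t' := by
          simp only [List.mem_cons, List.not_mem_nil, or_false] at hy2
          rcases hy2 with rfl | rfl
          exacts [htx', hrtx']
        rw [hyt]; exact htt'
    have hK : ∀ t1 t2 : T, (∃ y ∈ g ++ [it', rt'], y.tx = t1) →
        (∃ x ∈ [it, rt], x.tx = t2) →
        (∃ e ∈ h1, e.tx = t2) ∨ (∃ e ∈ h2, e.tx = t1) ∨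
          ¬ TM.Finished (h1 ++ (g ++ [it', rt']) ++ [it, rt] ++ h2) t1 := by
      rintro t1 t2 - ⟨x, hx, hxtx⟩
      left
      have hxt : x.tx = t := by
        simp only [List.mem_cons, List.not_mem_nil, or_false] at hx
        rcases hx with rfl | rfl
        exacts [htx, hrtx]
      have ht2 : t2 = t := by rw [← hxtx, hxt]
      rw [ht2]
      have hgnil : TM.proj g t = [] := TM.proj_eq_nil (fun e heg => (hg e heg).1)
      have h'nil : TM.proj [it', rt'] t = [] := TM.proj_eq_nil (by
        intro e he'
        simp only [List.mem_cons, List.not_mem_nil, or_false] at he'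
        rcases he' with rfl | rfl
        · rw [htx']; exact Ne.symm htt'
        · rw [hrtx']; exact Ne.symm htt')
      have hitrt : TM.proj [it, rt] t = [it, rt] := by
        simp [TM.proj, htx, hrtx]
      have hproj : TM.proj ha t = TM.proj h1 t ++ ([it, rt] ++ TM.proj h2 t) := by
        rw [hha]
        simp only [TM.proj_append, hgnil, h'nil, hitrt]
        simp
      obtain ⟨-, hwfp⟩ := hwf t
      rcases hwfp with hnil | ⟨hhead, -⟩
      · rw [hproj] at hnil; simp at hnil
      · by_cases h1nil : TM.proj h1 t = []
        · rw [hproj, h1nil] at hhead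
          simp at hhead
          exact absurd hhead (hnb t)
        · obtain ⟨e, hel⟩ := List.exists_mem_of_ne_nil _ h1nil
          have := TM.mem_of_mem_proj hel
          exact ⟨e, this.1, this.2⟩
    have hEq : TM.Equiv (h1 ++ g ++ [it', rt'] ++ [it, rt] ++ h2) ha := by
      rw [hlist, hha']
      exact TM.equiv_swap h1 [it, rt] (g ++ [it', rt']) h2 disj
    refine ⟨?_, hEq⟩
    have hNP'' : TM.noPendingProj (h1 ++ g ++ [it', rt'] ++ [it, rt] ++ h2) :=
      fun u e hl => hNPa u e (by rwa [hEq u] at hl)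
    have hc'' := TM.complete_eq_self_of_noPending _ hNP''
    refine ⟨_, TM.extends_refl _, hs, hseq, ?_, ?_⟩
    · rw [hc'']
      intro u; rw [hEq u]; exact hequiv u
    · intro u1 u2 htp
      rw [hc''] at htp
      apply hpre
      rw [hha']
      rw [hlist] at htp
      exact TM.transPrec_swap h1 [it, rt] (g ++ [it', rt']) h2 disj (hK u1 u2) htp
  · -- case 2 : move o_t' before o_t and g
    intro hcase
    have hha' : ha = h1 ++ ([it, rt] ++ g) ++ [it', rt'] ++ h2 := by
      rw [hha]; simp [List.append_assoc]
    have hlist : h1 ++ [it', rt'] ++ [it, rt] ++ g ++ h2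
        = h1 ++ [it', rt'] ++ ([it, rt] ++ g) ++ h2 := by
      simp [List.append_assoc]
    have disj : ∀ x ∈ [it, rt] ++ g, ∀ y ∈ [it', rt'], x.tx ≠ y.tx := by
      intro x hx y hy
      have hyt : y.tx = t' := by
        simp only [List.mem_cons, List.not_mem_nil, or_false] at hy
        rcases hy with rfl | rfl
        exacts [htx', hrtx']
      rw [hyt]
      rcases List.mem_append.mp hx with hx2 | hxg
      · have hxt : x.tx = t := by
          simp only [List.mem_cons, List.not_mem_nil, or_false] at hx2
          rcases hx2 with rfl | rfl
          exacts [htx, hrtx]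
        rw [hxt]; exact htt'
      · exact (hg x hxg).2
    have hXnil : TM.proj ([it, rt] ++ g) t' = [] := TM.proj_eq_nil (by
      intro e he
      rcases List.mem_append.mp he with he2 | heg
      · simp only [List.mem_cons, List.not_mem_nil, or_false] at he2
        rcases he2 with rfl | rfl
        · rw [htx]; exact htt'
        · rw [hrtx]; exact htt'
      · exact (hg e heg).2)
    have hYfull : TM.proj [it', rt'] t' = [it', rt'] := by
      simp [TM.proj, htx', hrtx']
    have hK : ∀ t1 t2 : T, (∃ y ∈ [it', rt'], y.tx = t1) →
        (∃ x ∈ [it, rt] ++ g, x.tx = t2) →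
        (∃ e ∈ h1, e.tx = t2) ∨ (∃ e ∈ h2, e.tx = t1) ∨
          ¬ TM.Finished (h1 ++ [it', rt'] ++ ([it, rt] ++ g) ++ h2) t1 := by
      rintro t1 t2 ⟨y, hy, hytx⟩ -
      have hyt : y.tx = t' := by
        simp only [List.mem_cons, List.not_mem_nil, or_false] at hy
        rcases hy with rfl | rfl
        exacts [htx', hrtx']
      have ht1 : t1 = t' := by rw [← hytx, hyt]
      rw [ht1]
      by_cases hp2 : TM.proj h2 t' = []
      · right; right
        intro hfin
        have hpr : TM.proj (h1 ++ [it', rt'] ++ ([it, rt] ++ g) ++ h2) t'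
            = TM.proj h1 t' ++ [it', rt'] := by
          simp only [TM.proj_append, hXnil, hYfull, hp2]
          simp
        have hlast : (TM.proj (h1 ++ [it', rt'] ++ ([it, rt] ++ g) ++ h2) t').getLast?
            = some rt' := by
          rw [hpr]; simp
        rcases hfin with hc | hab
        · unfold TM.Committed at hc
          rw [hlast] at hc
          exact hcase.1 (by injection hc)
        · unfold TM.Aborted at hab
          rw [hlast] at hab
          exact hcase.2 (by injection hab)
      · right; left
        obtain ⟨e, hel⟩ := List.exists_mem_of_ne_nil _ hp2
        have := TM.mem_of_mem_proj hel
        exact ⟨e, this.1, this.2⟩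
    have hEq : TM.Equiv (h1 ++ [it', rt'] ++ [it, rt] ++ g ++ h2) ha := by
      rw [hlist, hha']
      exact TM.equiv_swap h1 ([it, rt] ++ g) [it', rt'] h2 disj
    refine ⟨?_, hEq⟩
    have hNP'' : TM.noPendingProj (h1 ++ [it', rt'] ++ [it, rt] ++ g ++ h2) :=
      fun u e hl => hNPa u e (by rwa [hEq u] at hl)
    have hc'' := TM.complete_eq_self_of_noPending _ hNP''
    refine ⟨_, TM.extends_refl _, hs, hseq, ?_, ?_⟩
    · rw [hc'']
      intro u; rw [hEq u]; exact hequiv u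
    · intro u1 u2 htp
      rw [hc''] at htp
      apply hpre
      rw [hha']
      rw [hlist] at htp
      exact TM.transPrec_swap h1 ([it, rt] ++ g) [it', rt'] h2 disj (hK u1 u2) htp
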